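/- Let m ≥ 1 and let (A_i)_{i ∈ ℕ} be a sequence of subsets of ℝ^m, each of which is a conical limit set. If the intersection ⋂_{i ∈ ℕ} A_i is countable, then ⋂_{i ∈ ℕ} A_i is a conical limit set. -/

import Mathlib

open Filter Topology

/-- The open upper half-space over a normed space `V`: pairs `(t, v)` with `t > 0`. -/
def upperHalf (V : Type*) [NormedAddCommGroup V] : Set (ℝ × V) := {p | 0 < p.1}

/-- The conical limit set of `E ⊆ ℝ × V`: points `x` for which there are `C > 0` and a
sequence `(t_n, v_n)` in `E` with `t_n → 0`, `v_n → x` and `‖v_n - x‖ ≤ C * t_n`. -/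
def conicalLimitSet {V : Type*} [NormedAddCommGroup V] (E : Set (ℝ × V)) : Set V :=
  {x | ∃ C > 0, ∃ w : ℕ → ℝ × V, (∀ n, w n ∈ E) ∧
    Tendsto (fun n => (w n).1) atTop (𝓝 (0 : ℝ)) ∧
    Tendsto (fun n => (w n).2) atTop (𝓝 x) ∧
    ∀ n, ‖(w n).2 - x‖ ≤ C * (w n).1}

/-- `X ⊆ V` is a conical limit set if it is the conical limit set of some subset of the
upper half-space. -/
def IsConicalLimitSet {V : Type*} [NormedAddCommGroup V] (X : Set V) : Prop :=
  ∃ E ⊆ upperHalf V, conicalLimitSet E = X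

namespace CountableInterConical

section Aux

variable {V : Type} [NormedAddCommGroup V]

lemma mem_conicalLimitSet_iff {E : Set (ℝ × V)} {x : V} :
    x ∈ conicalLimitSet E ↔
      ∃ C > 0, ∀ ε > 0, ∃ p ∈ E, p.1 ≤ ε ∧ ‖p.2 - x‖ ≤ C * p.1 := by
  constructor
  · rintro ⟨C, hC, w, hwE, ht, hv, hcone⟩
    refine ⟨C, hC, fun ε hε => ?_⟩
    have : ∀ᶠ n in atTop, dist ((w n).1) 0 < ε := (Metric.tendsto_nhds.1 ht) ε hε
    obtain ⟨n, hn⟩ := this.exists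
    refine ⟨w n, hwE n, ?_, hcone n⟩
    have : |(w n).1| < ε := by simpa [Real.dist_eq] using hn
    linarith [le_abs_self (w n).1]
  · rintro ⟨C, hC, h⟩
    have H : ∀ n : ℕ, ∃ p ∈ E, p.1 ≤ 1/(n+1) ∧ ‖p.2 - x‖ ≤ C * p.1 := by
      intro n
      exact h (1/(n+1)) (by positivity)
    choose g hgE hgt hgc using H
    have hg0 : ∀ n, 0 ≤ (g n).1 := by
      intro n
      by_contra hneg
      push_neg at hneg
      have h1 : C * (g n).1 < 0 := mul_neg_of_pos_of_neg hC hneg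
      have h2 : (0:ℝ) ≤ ‖(g n).2 - x‖ := norm_nonneg _
      linarith [hgc n]
    have htend : Tendsto (fun n => (g n).1) atTop (𝓝 (0:ℝ)) := by
      refine squeeze_zero hg0 hgt ?_
      exact tendsto_one_div_add_atTop_nhds_zero_nat
    refine ⟨C, hC, g, hgE, htend, ?_, hgc⟩
    have : Tendsto (fun n => ‖(g n).2 - x‖) atTop (𝓝 0) := by
      refine squeeze_zero (fun n => norm_nonneg _) (fun n => hgc n) ?_
      simpa using htend.const_mul C
    rw [tendsto_iff_norm_sub_tendsto_zero]
    exact this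
  
lemma conicalLimitSet_empty : conicalLimitSet (∅ : Set (ℝ × V)) = ∅ := by
  ext x
  simp only [Set.mem_empty_iff_false, iff_false]
  rintro ⟨C, hC, w, hwE, -⟩
  exact hwE 0

end Aux

section Main

variable {V : Type} [NormedAddCommGroup V]

/-- The key "kernel" lemma: a set `S` inside the intersection all of whose points
accumulate on `S` at all scales and all tolerances must be empty. -/
lemma kernel_empty [CompleteSpace V]
    (A : ℕ → Set V) (Efam : ℕ → Set (ℝ × V))
    (hEsub : ∀ i, Efam i ⊆ upperHalf V) (hEeq : ∀ i, conicalLimitSet (Efam i) = A i)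
    (q : ℕ → V) (hq : (⋂ i, A i) = Set.range q)
    (S : Set V) (hSX : S ⊆ ⋂ i, A i)
    (hS : ∀ z ∈ S, ∀ η : ℕ, 1 ≤ η → ∃ ε > 0, ∀ s, 0 < s → s ≤ ε → ∀ h : V, dist h z ≤ s →
        ∃ w, w ∈ S ∧ w ≠ z ∧ dist w h < s / η) :
    S = ∅ := by
  by_contra hne
  obtain ⟨z₀, hz₀⟩ := Set.nonempty_iff_ne_empty.2 hne
  -- one step of the nested ball scheme
  have step : ∀ (n : ℕ) (z : V) (r : ℝ), ∃ (z' : V) (r' : ℝ) (t : ℝ) (v : V),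
      z ∈ S → 0 < r →
      (z' ∈ S ∧ 0 < r' ∧ r' ≤ r/2 ∧ (t, v) ∈ Efam (Nat.unpair n).1 ∧ 0 < t ∧
        t ≤ (1/2:ℝ)^n ∧
        Metric.closedBall z' r' ⊆ Metric.closedBall z r ∧
        Metric.closedBall z' r' ⊆ Metric.closedBall v (3*t) ∧
        q n ∉ Metric.closedBall z' r') := by
    intro n z r
    by_cases hz : z ∈ S
    swap
    · exact ⟨z, r, 1, z, fun h => absurd h hz⟩
    by_cases hr : 0 < r
    swap
    · exact ⟨z, r, 1, z, fun _ h => absurd h hr⟩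
    set j := (Nat.unpair n).1 with hj
    have hzX : z ∈ A j := Set.mem_iInter.mp (hSX hz) j
    rw [← hEeq j, mem_conicalLimitSet_iff] at hzX
    obtain ⟨Cz, hCz, hH⟩ := hzX
    set η : ℕ := ⌈Cz⌉₊ + 1 with hηdef
    have hη1 : 1 ≤ η := Nat.le_add_left 1 _
    have hηR : (1:ℝ) ≤ (η:ℝ) := by exact_mod_cast hη1
    have hηpos : (0:ℝ) < (η:ℝ) := by linarith
    have hCη : Cz ≤ (η:ℝ) := by
      calc Cz ≤ (⌈Cz⌉₊ : ℝ) := Nat.le_ceil Cz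
        _ ≤ (η:ℝ) := by exact_mod_cast Nat.le_succ _
    obtain ⟨εΓ, hεΓ, hΓ⟩ := hS z hz η hη1
    have htb0 : 0 < min ((1/2:ℝ)^n) (min (εΓ/η) (r/(8*η))) := by positivity
    obtain ⟨p, hpE, hpt, hpc⟩ := hH _ htb0
    have ht0 : 0 < p.1 := hEsub j hpE
    have ht_le1 : p.1 ≤ (1/2:ℝ)^n := le_trans hpt (min_le_left _ _)
    have ht_le2 : p.1 ≤ εΓ/η := le_trans hpt (le_trans (min_le_right _ _) (min_le_left _ _))
    have ht_le3 : p.1 ≤ r/(8*η) := le_trans hpt (le_trans (min_le_right _ _) (min_le_right _ _))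
    have hdvz : dist p.2 z ≤ (η:ℝ) * p.1 := by
      rw [dist_eq_norm]
      calc ‖p.2 - z‖ ≤ Cz * p.1 := hpc
        _ ≤ (η:ℝ) * p.1 := by nlinarith
    have hsε : (η:ℝ) * p.1 ≤ εΓ := by
      calc (η:ℝ) * p.1 ≤ (η:ℝ) * (εΓ/η) := by nlinarith
        _ = εΓ := by field_simp
    obtain ⟨w, hwS, hwz, hwv⟩ := hΓ ((η:ℝ)*p.1) (by positivity) hsε p.2 hdvz
    have hwv' : dist w p.2 < p.1 := by
      have : (η:ℝ)*p.1/η = p.1 := by field_simp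
      rwa [this] at hwv
    have key : ∃ z', z' ∈ S ∧ z' ≠ q n ∧ dist z' p.2 < 2*p.1 := by
      by_cases hwq : w = q n
      · obtain ⟨ε₁, hε₁, hΓ₁⟩ := hS w hwS 1 le_rfl
        obtain ⟨w₂, hw₂S, hw₂w, hw₂d⟩ := hΓ₁ (min ε₁ p.1) (by positivity) (min_le_left _ _) w
          (by rw [dist_self]; positivity)
        refine ⟨w₂, hw₂S, by rw [← hwq]; exact hw₂w, ?_⟩
        have hd2 : dist w₂ w < min ε₁ p.1 := by
          have : (min ε₁ p.1) / ((1:ℕ):ℝ) = min ε₁ p.1 := by norm_num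
          rwa [this] at hw₂d
        calc dist w₂ p.2 ≤ dist w₂ w + dist w p.2 := dist_triangle _ _ _
          _ < min ε₁ p.1 + p.1 := by linarith
          _ ≤ p.1 + p.1 := by linarith [min_le_right ε₁ p.1]
          _ = 2*p.1 := by ring
      · exact ⟨w, hwS, hwq, by linarith⟩
    obtain ⟨z', hz'S, hz'q, hz'v⟩ := key
    have hz'q0 : 0 < dist z' (q n) := dist_pos.2 hz'q
    refine ⟨z', min (r/2) (min p.1 (dist z' (q n)/2)), p.1, p.2,
      fun _ _ => ⟨hz'S, by positivity, min_le_left _ _, by simpa using hpE, ht0, ht_le1,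
        ?_, ?_, ?_⟩⟩
    · -- closedBall z' r' ⊆ closedBall z r
      intro x hx
      simp only [Metric.mem_closedBall] at hx ⊢
      have h1 : dist x z' ≤ r/2 := le_trans hx (min_le_left _ _)
      have h2 : dist z' z ≤ dist z' p.2 + dist p.2 z := dist_triangle _ _ _
      have h3 : (η:ℝ) * p.1 ≤ r/8 := by
        calc (η:ℝ) * p.1 ≤ (η:ℝ) * (r/(8*η)) := by nlinarith
          _ = r/8 := by field_simp
      have h4 : 2*p.1 ≤ r/4 := by
        have : p.1 ≤ r/8 := by nlinarith
        linarith
      calc dist x z ≤ dist x z' + dist z' z := dist_triangle _ _ _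
        _ ≤ r/2 + (2*p.1 + (η:ℝ)*p.1) := by linarith
        _ ≤ r/2 + (r/4 + r/8) := by linarith
        _ ≤ r := by linarith
    · -- closedBall z' r' ⊆ closedBall v (3t)
      intro x hx
      simp only [Metric.mem_closedBall] at hx ⊢
      have h1 : dist x z' ≤ p.1 := le_trans hx (le_trans (min_le_right _ _) (min_le_left _ _))
      calc dist x p.2 ≤ dist x z' + dist z' p.2 := dist_triangle _ _ _
        _ ≤ p.1 + 2*p.1 := by linarith
        _ = 3*p.1 := by ring
    · -- q n ∉ ball
      intro hmem
      simp only [Metric.mem_closedBall] at hmem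
      have h1 : dist (q n) z' ≤ dist z' (q n)/2 :=
        le_trans hmem (le_trans (min_le_right _ _) (min_le_right _ _))
      rw [dist_comm] at h1
      linarith
  choose Z R T W hstep using step
  set zr : ℕ → V × ℝ := fun n => Nat.rec (z₀, (1:ℝ)) (fun n p => (Z n p.1 p.2, R n p.1 p.2)) n
    with hzr
  have zrS : ∀ n, zr (n+1) = (Z n (zr n).1 (zr n).2, R n (zr n).1 (zr n).2) := fun n => rfl
  have inv : ∀ n, (zr n).1 ∈ S ∧ 0 < (zr n).2 := by
    intro n
    induction n with
    | zero => exact ⟨hz₀, one_pos⟩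
    | succ n ih =>
      have h := hstep n (zr n).1 (zr n).2 ih.1 ih.2
      rw [zrS n]
      exact ⟨h.1, h.2.1⟩
  have props : ∀ n, (zr (n+1)).1 ∈ S ∧ 0 < (zr (n+1)).2 ∧ (zr (n+1)).2 ≤ (zr n).2/2 ∧
      (T n (zr n).1 (zr n).2, W n (zr n).1 (zr n).2) ∈ Efam (Nat.unpair n).1 ∧
      0 < T n (zr n).1 (zr n).2 ∧ T n (zr n).1 (zr n).2 ≤ (1/2:ℝ)^n ∧
      Metric.closedBall (zr (n+1)).1 (zr (n+1)).2 ⊆ Metric.closedBall (zr n).1 (zr n).2 ∧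
      Metric.closedBall (zr (n+1)).1 (zr (n+1)).2 ⊆
        Metric.closedBall (W n (zr n).1 (zr n).2) (3 * T n (zr n).1 (zr n).2) ∧
      q n ∉ Metric.closedBall (zr (n+1)).1 (zr (n+1)).2 := by
    intro n
    have h := hstep n (zr n).1 (zr n).2 (inv n).1 (inv n).2
    rw [zrS n]
    exact h
  have hnest : ∀ m n, m ≤ n →
      Metric.closedBall (zr n).1 (zr n).2 ⊆ Metric.closedBall (zr m).1 (zr m).2 := by
    intro m n hmn
    induction n with
    | zero => rw [Nat.le_zero.mp hmn]
    | succ n ih =>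
      rcases Nat.lt_or_ge m (n+1) with h | h
      · exact subset_trans (props n).2.2.2.2.2.2.1 (ih (Nat.lt_succ_iff.mp h))
      · rw [Nat.le_antisymm hmn h]
  have hrbound : ∀ n, (zr n).2 ≤ (1/2:ℝ)^n := by
    intro n
    induction n with
    | zero => simp [hzr]
    | succ n ih =>
      have := (props n).2.2.1
      calc (zr (n+1)).2 ≤ (zr n).2/2 := this
        _ ≤ (1/2:ℝ)^n/2 := by linarith
        _ = (1/2:ℝ)^(n+1) := by ring
  have hd : ∀ n, dist ((zr n).1) ((zr (n+1)).1) ≤ 1 * (1/2:ℝ)^n := by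
    intro n
    have h1 : (zr (n+1)).1 ∈ Metric.closedBall (zr (n+1)).1 (zr (n+1)).2 :=
      Metric.mem_closedBall_self (inv (n+1)).2.le
    have h2 := (props n).2.2.2.2.2.2.1 h1
    simp only [Metric.mem_closedBall] at h2
    rw [dist_comm]
    calc dist (zr (n+1)).1 (zr n).1 ≤ (zr n).2 := h2
      _ ≤ (1/2:ℝ)^n := hrbound n
      _ = 1 * (1/2:ℝ)^n := by ring
  have hcauchy : CauchySeq (fun n => (zr n).1) :=
    cauchySeq_of_le_geometric (1/2) 1 (by norm_num) hd
  obtain ⟨y, hy⟩ := cauchySeq_tendsto_of_complete hcauchy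
  have hyball : ∀ m, y ∈ Metric.closedBall (zr m).1 (zr m).2 := by
    intro m
    refine IsClosed.mem_of_tendsto Metric.isClosed_closedBall hy ?_
    filter_upwards [Filter.eventually_ge_atTop m] with n hn
    exact hnest m n hn (Metric.mem_closedBall_self (inv n).2.le)
  have hyA : ∀ i, y ∈ A i := by
    intro i
    rw [← hEeq i, mem_conicalLimitSet_iff]
    refine ⟨3, by norm_num, fun ε hε => ?_⟩
    obtain ⟨l, hl⟩ := exists_pow_lt_of_lt_one hε (show (1/2:ℝ) < 1 by norm_num)
    set n := Nat.pair i l with hn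
    refine ⟨(T n (zr n).1 (zr n).2, W n (zr n).1 (zr n).2), ?_, ?_, ?_⟩
    · have hip : (Nat.unpair n).1 = i := by simp [hn, Nat.unpair_pair]
      rw [← hip]
      exact (props n).2.2.2.1
    · have h1 : T n (zr n).1 (zr n).2 ≤ (1/2:ℝ)^n := (props n).2.2.2.2.2.1
      have h2 : (1/2:ℝ)^n ≤ (1/2:ℝ)^l := by
        apply pow_le_pow_of_le_one (by norm_num) (by norm_num)
        exact Nat.right_le_pair i l
      exact le_of_lt (lt_of_le_of_lt (le_trans h1 h2) hl)
    · have h1 := (props n).2.2.2.2.2.2.2.1 (hyball (n+1))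
      simp only [Metric.mem_closedBall] at h1
      rw [← dist_eq_norm, dist_comm]
      linarith
  have hyX : y ∈ Set.range q := by rw [← hq]; exact Set.mem_iInter.2 hyA
  obtain ⟨N, hN⟩ := hyX
  exact (props N).2.2.2.2.2.2.2.2 (hN ▸ hyball (N+1))


/-- Rank data: every point of the intersection has "failure data" relative to the set of
points of greater or equal rank. -/
lemma exists_rank_data [CompleteSpace V]
    (A : ℕ → Set V) (Efam : ℕ → Set (ℝ × V))
    (hEsub : ∀ i, Efam i ⊆ upperHalf V) (hEeq : ∀ i, conicalLimitSet (Efam i) = A i)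
    (q : ℕ → V) (hq : (⋂ i, A i) = Set.range q) :
    ∃ (SS : V → Set V) (rk : V → Ordinal.{0}),
      (∀ x ∈ (⋂ i, A i), ∃ η : ℕ, 1 ≤ η ∧ ∀ ε > 0, ∃ s, 0 < s ∧ s ≤ ε ∧ ∃ h : V,
          dist h x ≤ s ∧ ∀ w, w ∈ SS x → w ≠ x → s / η ≤ dist w h) ∧
      (∀ x ∈ (⋂ i, A i), ∀ x' ∈ (⋂ i, A i), rk x ≤ rk x' → x' ∈ SS x) := by
  classical
  set X := ⋂ i, A i with hX
  set Γ : Set V → Set V := fun S => {z | z ∈ X ∧ ∀ η : ℕ, 1 ≤ η → ∃ ε > 0, ∀ s, 0 < s → s ≤ ε →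
      ∀ h : V, dist h z ≤ s → ∃ w, w ∈ S ∧ w ≠ z ∧ dist w h < s / η} with hΓdef
  set stage : Ordinal.{0} → Set V :=
    Ordinal.lt_wf.fix (fun α rec => X ∩ ⋂ (β : Ordinal.{0}), ⋂ (h : β < α), Γ (rec β h))
    with hstagedef
  have stage_eq : ∀ α, stage α = X ∩ ⋂ (β : Ordinal.{0}), ⋂ (_ : β < α), Γ (stage β) := by
    intro α
    exact WellFounded.fix_eq _ _ _
  have stage_mem : ∀ (α) (z : V), z ∈ stage α ↔ z ∈ X ∧ ∀ β < α, z ∈ Γ (stage β) := by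
    intro α z
    rw [stage_eq α]
    simp [Set.mem_iInter]
  have stage_anti : ∀ {α β : Ordinal.{0}}, α ≤ β → stage β ⊆ stage α := by
    intro α β hab z hz
    rw [stage_mem] at hz ⊢
    exact ⟨hz.1, fun γ hγ => hz.2 γ (lt_of_lt_of_le hγ hab)⟩
  have hninj : ¬ Function.Injective stage := by
    intro hinj
    have : Small.{0} Ordinal.{0} := small_of_injective hinj
    exact not_small_ordinal this
  obtain ⟨a, b, hab, hne⟩ := Function.not_injective_iff.1 hninj
  have key : ∀ {α β : Ordinal.{0}}, α < β → stage α = stage β → stage α = ∅ := by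
    intro α β hlt heq
    have h1 : stage α ⊆ Γ (stage α) := by
      intro z hz
      have hz' : z ∈ stage (Order.succ α) := by
        have hsle : Order.succ α ≤ β := Order.succ_le_of_lt hlt
        exact stage_anti hsle (heq ▸ hz)
      rw [stage_mem] at hz'
      exact hz'.2 α (Order.lt_succ α)
    refine kernel_empty A Efam hEsub hEeq q hq (stage α) ?_ ?_
    · intro z hz; exact (h1 hz).1
    · intro z hz η hη
      exact (h1 hz).2 η hη
  have hstab : ∃ α, stage α = ∅ := by
    rcases hne.lt_or_gt with h | h
    · exact ⟨a, key h hab⟩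
    · exact ⟨b, key h hab.symm⟩
  obtain ⟨α₀, hα₀⟩ := hstab
  have hBne : ∀ x ∈ X, {β : Ordinal.{0} | x ∉ Γ (stage β)}.Nonempty := by
    intro x hx
    by_contra hB
    rw [Set.not_nonempty_iff_eq_empty] at hB
    have hmem : x ∈ stage α₀ := by
      rw [stage_mem]
      refine ⟨hx, fun β _ => ?_⟩
      by_contra hc
      have : β ∈ {β : Ordinal.{0} | x ∉ Γ (stage β)} := hc
      rw [hB] at this
      exact this
    rw [hα₀] at hmem
    exact hmem
  set rk : V → Ordinal.{0} := fun x => sInf {β | x ∉ Γ (stage β)} with hrk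
  have hrk_mem : ∀ x ∈ X, x ∉ Γ (stage (rk x)) := by
    intro x hx
    exact csInf_mem (hBne x hx)
  have hrk_stage : ∀ x ∈ X, x ∈ stage (rk x) := by
    intro x hx
    rw [stage_mem]
    refine ⟨hx, fun β hβ => ?_⟩
    by_contra hc
    have hle : rk x ≤ β := csInf_le (OrderBot.bddBelow _) hc
    exact absurd hβ (not_lt.2 hle)
  refine ⟨fun x => stage (rk x), rk, ?_, ?_⟩
  · intro x hx
    have h1 := hrk_mem x hx
    have h2 : ¬ (∀ η : ℕ, 1 ≤ η → ∃ ε > 0, ∀ s, 0 < s → s ≤ ε →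
        ∀ h : V, dist h x ≤ s → ∃ w, w ∈ stage (rk x) ∧ w ≠ x ∧ dist w h < s / η) := by
      intro hQ
      exact h1 ⟨hx, hQ⟩
    push_neg at h2
    obtain ⟨η, hη1, hηdata⟩ := h2
    refine ⟨η, hη1, fun ε hε => ?_⟩
    obtain ⟨s, hs1, hs2, h, hh1, hh2⟩ := hηdata ε hε
    exact ⟨s, hs1, hs2, h, hh1, fun w hw hwx => hh2 w hw hwx⟩
  · intro x hx x' hx' hle
    exact stage_anti hle (hrk_stage x' hx')


lemma main_construction {V : Type} [NormedAddCommGroup V] [CompleteSpace V]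
    (A : ℕ → Set V) (hA : ∀ i, IsConicalLimitSet (A i))
    (hc : (⋂ i, A i).Countable) : IsConicalLimitSet (⋂ i, A i) := by
  classical
  choose Efam hEsub hEeq using hA
  rcases Set.eq_empty_or_nonempty (⋂ i, A i) with hXe | hXne
  · exact ⟨∅, by intro p hp; exact absurd hp (Set.notMem_empty p),
      by rw [conicalLimitSet_empty, hXe]⟩
  obtain ⟨q, hq⟩ := hc.exists_eq_range hXne
  obtain ⟨SS, rk, hD2, hD3⟩ := exists_rank_data A Efam hEsub hEeq q hq
  have hqX : ∀ k, q k ∈ ⋂ i, A i := fun k => hq ▸ Set.mem_range_self k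
  -- totalized per-point data
  have Hdata : ∀ x : V, ∃ η : ℕ, 1 ≤ η ∧ (x ∈ (⋂ i, A i) → ∀ ε > 0, ∃ s, 0 < s ∧ s ≤ ε ∧
      ∃ h : V, dist h x ≤ s ∧ ∀ w, w ∈ SS x → w ≠ x → s / η ≤ dist w h) := by
    intro x
    by_cases hx : x ∈ ⋂ i, A i
    · obtain ⟨η, hη1, hd⟩ := hD2 x hx
      exact ⟨η, hη1, fun _ => hd⟩
    · exact ⟨1, le_rfl, fun h => absurd h hx⟩
  choose η hη1 hηd using Hdata
  have Hhole : ∀ (x : V) (ε : ℝ), ∃ (s : ℝ) (h : V), x ∈ (⋂ i, A i) → 0 < ε →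
      (0 < s ∧ s ≤ ε ∧ dist h x ≤ s ∧ ∀ w, w ∈ SS x → w ≠ x → s / η x ≤ dist w h) := by
    intro x ε
    by_cases hx : x ∈ ⋂ i, A i
    · by_cases hε : 0 < ε
      · obtain ⟨s, hs1, hs2, h, hh1, hh2⟩ := hηd x hx ε hε
        exact ⟨s, h, fun _ _ => ⟨hs1, hs2, hh1, hh2⟩⟩
      · exact ⟨1, x, fun _ h => absurd h hε⟩
    · exact ⟨1, x, fun h => absurd h hx⟩
  choose sf hf hsh using Hhole
  set c : ℕ → ℕ := fun k => 4 * η (q k) * (k+1) with hc_def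
  have hc1 : ∀ k, (1:ℝ) ≤ (c k : ℝ) := by
    intro k
    have h1 := hη1 (q k)
    have : (1:ℕ) ≤ c k := by
      calc (1:ℕ) ≤ 4 * 1 * (k+1) := by omega
        _ ≤ 4 * η (q k) * (k+1) := by
          apply Nat.mul_le_mul_right
          exact Nat.mul_le_mul_left 4 h1
    exact_mod_cast this
  have hcpos : ∀ k, (0:ℝ) < (c k : ℝ) := fun k => lt_of_lt_of_le one_pos (hc1 k)
  set σ : ℕ → ℕ → ℝ := fun k n => sf (q k) ((1/2:ℝ)^(n+k)) with hσ_def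
  set hp : ℕ → ℕ → V := fun k n => hf (q k) ((1/2:ℝ)^(n+k)) with hp_def
  have hfacts : ∀ k n, 0 < σ k n ∧ σ k n ≤ (1/2:ℝ)^(n+k) ∧ dist (hp k n) (q k) ≤ σ k n ∧
      ∀ w, w ∈ SS (q k) → w ≠ q k → σ k n / η (q k) ≤ dist w (hp k n) :=
    fun k n => hsh (q k) _ (hqX k) (by positivity)
  refine ⟨{p : ℝ × V | ∃ k n : ℕ, p = (σ k n / c k, hp k n)}, ?_, ?_⟩
  · rintro p ⟨k, n, rfl⟩
    have h1 := (hfacts k n).1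
    have h2 := hcpos k
    show (0:ℝ) < σ k n / c k
    positivity
  apply Set.Subset.antisymm
  · -- blocking: conicalLimitSet E ⊆ ⋂ A i
    intro y hy
    by_contra hyX
    obtain ⟨C, hC, w, hwE, ht, hv, hcone⟩ := hy
    choose kk nn hkn using hwE
    have hT : ∀ l, (w l).1 = σ (kk l) (nn l) / c (kk l) := fun l => by rw [hkn l]
    have hV : ∀ l, (w l).2 = hp (kk l) (nn l) := fun l => by rw [hkn l]
    have ht0 : ∀ l, 0 < (w l).1 := by
      intro l
      rw [hT l]
      have := (hfacts (kk l) (nn l)).1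
      have := hcpos (kk l)
      positivity
    have htt : ∀ δ, 0 < δ → ∃ L, ∀ l, L ≤ l → (w l).1 < δ := by
      intro δ hδ
      obtain ⟨L, hL⟩ := (Metric.tendsto_atTop.1 ht) δ hδ
      refine ⟨L, fun l hl => ?_⟩
      have := hL l hl
      rw [Real.dist_eq, sub_zero] at this
      exact lt_of_le_of_lt (le_abs_self _) this
    have hcone' : ∀ l, dist y ((w l).2) ≤ C * (w l).1 := by
      intro l
      rw [dist_comm, dist_eq_norm]
      exact hcone l
    have hσt : ∀ l, σ (kk l) (nn l) = (c (kk l) : ℝ) * (w l).1 := by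
      intro l
      rw [hT l]
      field_simp
      exact (mul_div_cancel_right₀ _ (ne_of_gt (hcpos (kk l)))).symm
    -- no index occurs frequently
    have Hk : ∀ kbar : ℕ, ∃ L, ∀ l, L ≤ l → kk l ≠ kbar := by
      intro kbar
      by_contra hfreq
      push_neg at hfreq
      have hyq : y = q kbar := by
        apply eq_of_forall_dist_le
        intro δ hδ
        have hδ' : 0 < δ / (C + c kbar + 1) := by positivity
        obtain ⟨L, hL⟩ := htt _ hδ'
        obtain ⟨l, hlL, hlk⟩ := hfreq L
        have h1 : dist y (q kbar) ≤ dist y ((w l).2) + dist ((w l).2) (q kbar) := dist_triangle _ _ _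
        have h2 : dist ((w l).2) (q kbar) ≤ σ (kk l) (nn l) := by
          rw [hV l, hlk]
          rw [← hlk]
          exact (hfacts (kk l) (nn l)).2.2.1
        have h3 := hcone' l
        have h4 := hL l hlL
        have h5 : σ (kk l) (nn l) = (c kbar : ℝ) * (w l).1 := by rw [hσt l, hlk]
        have h6 : (0:ℝ) < C + c kbar + 1 := by positivity
        calc dist y (q kbar) ≤ C * (w l).1 + (c kbar : ℝ) * (w l).1 := by
              rw [← h5]; linarith
          _ ≤ (C + c kbar + 1) * (w l).1 := by nlinarith [ht0 l]
          _ ≤ (C + c kbar + 1) * (δ / (C + c kbar + 1)) := by nlinarith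
          _ = δ := by field_simp
      exact hyX (hyq ▸ hqX kbar)
    have HK : ∀ K : ℕ, ∃ L, ∀ l, L ≤ l → K ≤ kk l := by
      intro K
      induction K with
      | zero => exact ⟨0, fun l _ => Nat.zero_le _⟩
      | succ K ih =>
        obtain ⟨L1, hL1⟩ := ih
        obtain ⟨L2, hL2⟩ := Hk K
        refine ⟨max L1 L2, fun l hl => ?_⟩
        have h1 := hL1 l (le_trans (le_max_left _ _) hl)
        have h2 := hL2 l (le_trans (le_max_right _ _) hl)
        omega
    have Hapex : ∀ l, dist (q (kk l)) y ≤ (1+C) * (1/2:ℝ)^(kk l) := by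
      intro l
      have h1 : dist (q (kk l)) ((w l).2) ≤ σ (kk l) (nn l) := by
        rw [hV l, dist_comm]
        exact (hfacts (kk l) (nn l)).2.2.1
      have h2 : (w l).1 ≤ σ (kk l) (nn l) := by
        rw [hT l]
        exact div_le_self (hfacts (kk l) (nn l)).1.le (hc1 (kk l))
      have h3 : σ (kk l) (nn l) ≤ (1/2:ℝ)^(kk l) := by
        calc σ (kk l) (nn l) ≤ (1/2:ℝ)^(nn l + kk l) := (hfacts (kk l) (nn l)).2.1
          _ ≤ (1/2:ℝ)^(kk l) :=
            pow_le_pow_of_le_one (by norm_num) (by norm_num) (Nat.le_add_left _ _)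
      have h4 := hcone' l
      calc dist (q (kk l)) y ≤ dist (q (kk l)) ((w l).2) + dist ((w l).2) y :=
            dist_triangle _ _ _
        _ ≤ σ (kk l) (nn l) + C * (w l).1 := by rw [dist_comm ((w l).2) y]; linarith
        _ ≤ σ (kk l) (nn l) + C * σ (kk l) (nn l) := by nlinarith
        _ = (1+C) * σ (kk l) (nn l) := by ring
        _ ≤ (1+C) * (1/2:ℝ)^(kk l) := by nlinarith
    have Hdist : ∀ δ, 0 < δ → ∃ L, ∀ l, L ≤ l → dist (q (kk l)) y < δ := by
      intro δ hδ
      obtain ⟨K, hKpow⟩ := exists_pow_lt_of_lt_one (show (0:ℝ) < δ/(1+C) by positivity)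
        (show (1/2:ℝ) < 1 by norm_num)
      obtain ⟨L, hL⟩ := HK K
      refine ⟨L, fun l hl => ?_⟩
      have h2 : (1/2:ℝ)^(kk l) ≤ (1/2:ℝ)^K :=
        pow_le_pow_of_le_one (by norm_num) (by norm_num) (hL l hl)
      calc dist (q (kk l)) y ≤ (1+C)*(1/2:ℝ)^(kk l) := Hapex l
        _ ≤ (1+C)*(1/2:ℝ)^K := by nlinarith
        _ < (1+C)*(δ/(1+C)) := by nlinarith
        _ = δ := by field_simp
    have Hp : ∀ p : V, ∃ L, ∀ l, L ≤ l → q (kk l) ≠ p := by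
      intro p
      by_contra hfreq
      push_neg at hfreq
      have hyp : y = p := by
        apply eq_of_forall_dist_le
        intro δ hδ
        obtain ⟨L, hL⟩ := Hdist δ hδ
        obtain ⟨l, hlL, hlp⟩ := hfreq L
        have := hL l hlL
        rw [hlp, dist_comm] at this
        exact this.le
      obtain ⟨l, -, hlp⟩ := hfreq 0
      exact hyX (hyp ▸ (hlp ▸ hqX (kk l)))
    -- final contradiction
    obtain ⟨L₀, hL₀⟩ := HK (⌈C⌉₊ + 2)
    have hTne : ({o : Ordinal.{0} | ∃ l, L₀ ≤ l ∧ rk (q (kk l)) = o}).Nonempty :=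
      ⟨rk (q (kk L₀)), L₀, le_rfl, rfl⟩
    obtain ⟨lt', hltL, hltrk⟩ := csInf_mem hTne
    have hmin : ∀ l, L₀ ≤ l →
        sInf {o : Ordinal.{0} | ∃ l, L₀ ≤ l ∧ rk (q (kk l)) = o} ≤ rk (q (kk l)) :=
      fun l hl => csInf_le (OrderBot.bddBelow _) ⟨l, hl, rfl⟩
    obtain ⟨L₁, hL₁⟩ := Hdist ((w lt').1) (ht0 lt')
    obtain ⟨L₂, hL₂⟩ := Hp (q (kk lt'))
    set l' := max L₀ (max L₁ L₂) with hl'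
    have hw1 : dist (q (kk l')) y < (w lt').1 := hL₁ l' (le_trans (le_max_left _ _) (le_max_right _ _))
    have hw2 : q (kk l') ≠ q (kk lt') := hL₂ l' (le_trans (le_max_right _ _) (le_max_right _ _))
    have hw3 : rk (q (kk lt')) ≤ rk (q (kk l')) := by
      rw [hltrk]
      exact hmin l' (le_max_left _ _)
    have hw4 : q (kk l') ∈ SS (q (kk lt')) := hD3 _ (hqX _) _ (hqX _) hw3
    have hole := (hfacts (kk lt') (nn lt')).2.2.2 (q (kk l')) hw4 hw2
    have hub : dist (q (kk l')) (hp (kk lt') (nn lt')) ≤ (w lt').1 + C * (w lt').1 := by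
      have h1 := hcone' lt'
      rw [hV lt'] at h1
      calc dist (q (kk l')) (hp (kk lt') (nn lt')) ≤
            dist (q (kk l')) y + dist y (hp (kk lt') (nn lt')) := dist_triangle _ _ _
        _ ≤ (w lt').1 + C * (w lt').1 := by linarith [hw1.le]
    have hcomp : σ (kk lt') (nn lt') / η (q (kk lt')) = 4 * ((kk lt' : ℝ)+1) * (w lt').1 := by
      rw [hσt lt']
      have hη0 : (0:ℝ) < (η (q (kk lt')) : ℝ) := by
        have := hη1 (q (kk lt'))
        exact_mod_cast Nat.lt_of_lt_of_le Nat.zero_lt_one this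
      have hcc : ((c (kk lt') : ℕ) : ℝ) = 4 * (η (q (kk lt')) : ℝ) * ((kk lt' : ℝ) + 1) := by
        simp only [hc_def]
        push_cast
        ring
      rw [hcc]
      field_simp
    have hfinal : 4 * ((kk lt' : ℝ)+1) ≤ 1 + C := by
      have h1 : 4*((kk lt' : ℝ)+1)*(w lt').1 ≤ (1+C)*(w lt').1 := by
        rw [← hcomp]
        calc σ (kk lt') (nn lt') / η (q (kk lt')) ≤
              dist (q (kk l')) (hp (kk lt') (nn lt')) := hole
          _ ≤ (w lt').1 + C * (w lt').1 := hub
          _ = (1+C)*(w lt').1 := by ring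
      have h2 := ht0 lt'
      nlinarith
    have hbig : (⌈C⌉₊ + 2 : ℕ) ≤ kk lt' := hL₀ lt' hltL
    have hceil : C ≤ (⌈C⌉₊:ℝ) := Nat.le_ceil C
    have hbigR : ((⌈C⌉₊:ℝ) + 2) ≤ (kk lt' : ℝ) := by exact_mod_cast hbig
    linarith
  · -- membership: ⋂ A i ⊆ conicalLimitSet E
    intro x hx
    rw [hq] at hx
    obtain ⟨k, rfl⟩ := hx
    rw [mem_conicalLimitSet_iff]
    refine ⟨c k, hcpos k, fun ε hε => ?_⟩
    obtain ⟨n, hn⟩ := exists_pow_lt_of_lt_one hε (show (1/2:ℝ) < 1 by norm_num)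
    refine ⟨(σ k n / c k, hp k n), ⟨k, n, rfl⟩, ?_, ?_⟩
    · have h1 := (hfacts k n).2.1
      have h2 : σ k n / c k ≤ σ k n := div_le_self (hfacts k n).1.le (hc1 k)
      have h3 : (1/2:ℝ)^(n+k) ≤ (1/2:ℝ)^n :=
        pow_le_pow_of_le_one (by norm_num) (by norm_num) (Nat.le_add_right _ _)
      calc (σ k n / c k) ≤ σ k n := h2
        _ ≤ (1/2:ℝ)^(n+k) := h1
        _ ≤ (1/2:ℝ)^n := h3
        _ ≤ ε := hn.le
    · have h3 := (hfacts k n).2.2.1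
      have h4 : (c k : ℝ) * (σ k n / c k) = σ k n := by
        field_simp
        exact mul_div_cancel_left₀ _ (ne_of_gt (hcpos k))
      show ‖hp k n - q k‖ ≤ (c k : ℝ) * (σ k n / c k)
      rw [h4, ← dist_eq_norm]
      exact h3


end Main


end CountableInterConical

/-- A countable intersection of conical limit sets in `ℝ^m` which is countable is itself
a conical limit set. -/
theorem countable_iInter_conicalLimitSet (m : ℕ) (hm : 1 ≤ m)
    (A : ℕ → Set (EuclideanSpace ℝ (Fin m))) (hA : ∀ i, IsConicalLimitSet (A i))
    (hc : (⋂ i, A i).Countable) :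
    IsConicalLimitSet (⋂ i, A i) := by
  exact CountableInterConical.main_construction A hA hc
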